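/- Let R be an equivalence relation on a finite set U, F a field, and B(R) the matrix representation of R over F. A subset X of U is minimal (with respect to set inclusion) among subsets whose indexed columns of B(R) are linearly dependent over F if and only if X = {x, y} for some x ≠ y with x R y. -/
import Mathlib


/- The matrix representation `B(R)` of an equivalence relation (setoid) `s` over a field `F`. -/
open Classical in
noncomputable def repMx (F : Type*) [Field F] {α : Type*} (s : Setoid α) :
    Matrix (Quotient s) α F :=
  Matrix.of fun q x => if Quotient.mk s x = q then (1 : F) else 0

/-- The columns of a matrix `A` indexed by a set `X` are linearly independent over `F`. -/
def ColIndep (F : Type*) [Field F] {m α : Type*} (A : Matrix m α F) (X : Set α) : Prop :=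
  LinearIndependent F (fun x : X => fun i => A i (x : α))

open Classical in
lemma repMx_col_eq (F : Type*) [Field F] {α : Type*} (s : Setoid α) (x : α) :
    (fun q => repMx F s q x) = Pi.single (Quotient.mk s x) (1 : F) := by
  funext q
  simp only [repMx, Matrix.of_apply, Pi.single_apply]
  exact if_congr eq_comm rfl rfl

open Classical in
lemma colIndep_iff {α : Type*} [Fintype α] (F : Type*) [Field F]
    (s : Setoid α) (X : Set α) :
    ColIndep F (repMx F s) X ↔ Set.InjOn (Quotient.mk s) X := by
  have hsingle : LinearIndependent F (fun q : Quotient s => Pi.single q (1 : F)) := by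
    have := (Pi.basisFun F (Quotient s)).linearIndependent
    simpa [funext (Pi.basisFun_apply F (Quotient s))] using this
  constructor
  · intro h x hx y hy hxy
    have hinj := h.injective
    have : (⟨x, hx⟩ : X) = ⟨y, hy⟩ := by
      apply hinj
      funext q
      simp only [repMx, Matrix.of_apply, hxy]
    exact congrArg Subtype.val this
  · intro hinj
    have heq : (fun x : X => fun q => repMx F s q (x : α)) =
        (fun q : Quotient s => Pi.single q (1 : F)) ∘ (fun x : X => Quotient.mk s (x : α)) := by
      funext x
      exact repMx_col_eq F s x
    rw [ColIndep, heq]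
    apply hsingle.comp
    intro a b hab
    exact Subtype.ext (hinj a.2 b.2 hab)

/-- `X ⊆ U` is minimal among subsets whose indexed columns of `B(R)` are
linearly dependent over `F` iff `X = {x, y}` for some `x ≠ y` with `x R y`. -/
theorem minimal_dep_repMx_iff {α : Type*} [Fintype α] (F : Type*) [Field F]
    (s : Setoid α) (X : Set α) :
    (¬ ColIndep F (repMx F s) X ∧
        ∀ Y : Set α, ¬ ColIndep F (repMx F s) Y → Y ⊆ X → Y = X) ↔
      ∃ x y : α, x ≠ y ∧ s.r x y ∧ X = {x, y} := by
  simp only [colIndep_iff]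
  constructor
  · rintro ⟨hdep, hmin⟩
    rw [Set.InjOn] at hdep
    push_neg at hdep
    obtain ⟨x, hx, y, hy, hxy, hne⟩ := hdep
    refine ⟨x, y, hne, Quotient.exact hxy, ?_⟩
    have hsub : ({x, y} : Set α) ⊆ X := by
      intro z hz; rcases hz with rfl | rfl
      · exact hx
      · exact hy
    have : ¬ Set.InjOn (Quotient.mk s) ({x, y} : Set α) := by
      intro h
      exact hne (h (Set.mem_insert x {y}) (Set.mem_insert_of_mem x rfl) hxy)
    exact (hmin _ this hsub).symm
  · rintro ⟨x, y, hne, hr, rfl⟩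
    constructor
    · intro h
      exact hne (h (Set.mem_insert x {y}) (Set.mem_insert_of_mem x rfl) (Quotient.sound hr))
    · intro Y hYdep hYsub
      rw [Set.InjOn] at hYdep
      push_neg at hYdep
      obtain ⟨a, ha, b, hb, hab, hneab⟩ := hYdep
      apply Set.Subset.antisymm hYsub
      have haX := hYsub ha
      have hbX := hYsub hb
      intro z hz
      rcases hz with rfl | rfl
      · rcases haX with rfl | rfl
        · exact ha
        · rcases hbX with rfl | rfl
          · exact hb
          · exact absurd rfl hneab
      · rcases haX with rfl | rfl
        · rcases hbX with rfl | rfl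
          · exact absurd rfl hneab
          · exact hb
        · exact ha
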